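/- Let M₁ and M₂ be matroids on ground sets E₁ and E₂ with E₁ ∩ E₂ = {c}, where c is neither a loop nor a coloop of M₁ or of M₂. If the toric ideals J_{M₁} and J_{M₂} are both generated by quadratic binomials, then the toric ideal of the 2-sum M₁ ⊕₂ M₂ is generated by quadratic binomials. -/

import Mathlib

open MvPolynomial


section Toric

/-- The toric (bases monomial) map of a matroid: the variables are indexed by the bases of `M`,
and the variable of a basis `B` is sent to `∏_{l ∈ B} s_l`. -/
noncomputable def matroidToricMap (K : Type) [Field K] {α : Type} [Fintype α] [DecidableEq α]
    (M : Matroid α) :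
    MvPolynomial {B : Finset α // M.IsBase ↑B} K →ₐ[K] MvPolynomial α K :=
  aeval fun b => ∏ l ∈ b.1, X l

/-- The toric ideal `J_M` of a matroid `M`. -/
noncomputable def matroidToricIdeal (K : Type) [Field K] {α : Type} [Fintype α] [DecidableEq α]
    (M : Matroid α) : Ideal (MvPolynomial {B : Finset α // M.IsBase ↑B} K) :=
  RingHom.ker (matroidToricMap K M).toRingHom

/-- `G` consists of quadratic binomials `x_i x_j - x_k x_l`. -/
def IsQuadBinomialSet {σ K : Type} [Field K] (G : Set (MvPolynomial σ K)) : Prop :=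
  ∀ f ∈ G, ∃ i j k l : σ, f = X i * X j - X k * X l

/-- The ideal `I` is generated by quadratic binomials. -/
def GeneratedByQuadBinomials {σ K : Type} [Field K] (I : Ideal (MvPolynomial σ K)) : Prop :=
  ∃ G : Set (MvPolynomial σ K), IsQuadBinomialSet G ∧ Ideal.span G = I

end Toric

section MatroidOps

/-- `c` is a loop of `M`: an element of the ground set belonging to no basis of `M`. -/
def IsLoopElem {α : Type} (M : Matroid α) (c : α) : Prop :=
  c ∈ M.E ∧ ∀ B, M.IsBase B → c ∉ B

/-- `c` is a coloop of `M`: an element contained in every basis of `M`. -/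
def IsColoopElem {α : Type} (M : Matroid α) (c : α) : Prop :=
  ∀ B, M.IsBase B → c ∈ B

/-- `M'` is the deletion `M ∖ c`: its ground set is `M.E \ {c}` and its bases are
`{B \ {c} : B basis of M}` if `c` is a coloop of `M`, and `{B basis of M : c ∉ B}`
otherwise. -/
def IsDeletionOf {α : Type} (M' M : Matroid α) (c : α) : Prop :=
  M'.E = M.E \ {c} ∧ ∀ S : Set α, M'.IsBase S ↔
    ((IsColoopElem M c ∧ ∃ B, M.IsBase B ∧ S = B \ {c}) ∨
     (¬ IsColoopElem M c ∧ M.IsBase S ∧ c ∉ S))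

/-- `M'` is the contraction `M / c`, defined dually: `M / c = (M✶ ∖ c)✶`. -/
def IsContractionOf {α : Type} (M' M : Matroid α) (c : α) : Prop :=
  IsDeletionOf (M'✶) (M✶) c

end MatroidOps

section Aux
variable {K : Type} [Field K] {σ : Type} {α : Type} [DecidableEq α]

noncomputable def ind (b : Finset α) : α →₀ ℕ := ∑ l ∈ b, Finsupp.single l 1

lemma ind_insert {a : α} {s : Finset α} (ha : a ∉ s) :
    ind (insert a s) = Finsupp.single a 1 + ind s := by
  rw [ind, ind, Finset.sum_insert ha]

lemma ind_apply (b : Finset α) (e : α) : ind b e = if e ∈ b then 1 else 0 := by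
  classical
  induction b using Finset.induction with
  | empty => simp [ind]
  | @insert a s ha ih =>
    rw [ind_insert ha, Finsupp.add_apply, ih, Finsupp.single_apply]
    by_cases hea : a = e
    · subst hea; simp [ha]
    · simp [hea, Ne.symm hea, Finset.mem_insert]

lemma prod_X_eq (b : Finset α) : (∏ l ∈ b, X l : MvPolynomial α K) = monomial (ind b) 1 := by
  classical
  induction b using Finset.induction with
  | empty => simp [ind]
  | @insert a s ha ih =>
    rw [Finset.prod_insert ha, ih, X, monomial_mul, mul_one, ind_insert ha]

noncomputable def mon (m : Multiset σ) : MvPolynomial σ K := (m.map X).prod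

@[simp] lemma mon_zero : (mon 0 : MvPolynomial σ K) = 1 := by simp [mon]

lemma mon_cons (s : σ) (m : Multiset σ) : (mon (s ::ₘ m) : MvPolynomial σ K) = X s * mon m := by
  simp [mon]

lemma mon_add (m m' : Multiset σ) : (mon (m + m') : MvPolynomial σ K) = mon m * mon m' := by
  simp [mon]

lemma mon_toMultiset (a : σ →₀ ℕ) : (mon a.toMultiset : MvPolynomial σ K) = monomial a 1 := by
  classical
  induction a using Finsupp.induction with
  | zero => simp
  | single_add s n f hf hn ih =>
    rw [Finsupp.toMultiset_add, mon_add, ih, monomial_single_add, Finsupp.toMultiset_single]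
    congr 1
    rw [mon, Multiset.nsmul_singleton, Multiset.map_replicate, Multiset.prod_replicate]
noncomputable def W (d : σ → Finset α) (m : Multiset σ) : α →₀ ℕ :=
  (m.map (fun s => ind (d s))).sum

variable (K) in
noncomputable def Phi (d : σ → Finset α) : MvPolynomial σ K →ₐ[K] MvPolynomial α K :=
  aeval fun s => ∏ l ∈ d s, X l

variable {d : σ → Finset α}

lemma Phi_X (s : σ) : Phi K d (X s) = monomial (ind (d s)) 1 := by
  rw [Phi, aeval_X, prod_X_eq]

lemma W_cons (s : σ) (m : Multiset σ) : W d (s ::ₘ m) = ind (d s) + W d m := by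
  simp [W]

lemma aeval_mon (m : Multiset σ) :
    Phi K d (mon m : MvPolynomial σ K) = monomial (W d m) 1 := by
  induction m using Multiset.induction with
  | empty => simp [W, mon, Phi]
  | cons s m ih =>
    rw [mon_cons, map_mul, ih, Phi_X, monomial_mul, one_mul, W_cons]

lemma aeval_monomial1 (a : σ →₀ ℕ) :
    Phi K d (monomial a 1 : MvPolynomial σ K)
      = monomial (W d a.toMultiset) 1 := by
  rw [← mon_toMultiset, aeval_mon]

lemma aeval_monomial_c (a : σ →₀ ℕ) (c : K) :
    Phi K d (monomial a c : MvPolynomial σ K)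
      = monomial (W d a.toMultiset) c := by
  have : (monomial a c : MvPolynomial σ K) = C c * monomial a 1 := by
    rw [C_mul_monomial, mul_one]
  have hC : Phi K d (C c) = C c := by simp [Phi, algebraMap_eq]
  rw [this, map_mul, hC, aeval_monomial1, C_mul_monomial, mul_one]

/-- Lemma A: if all equal-degree binomials are in the span, the whole kernel is. -/
lemma ker_le_span (G : Set (MvPolynomial σ K))
    (hbin : ∀ a b : σ →₀ ℕ, W d a.toMultiset = W d b.toMultiset →
      (monomial a 1 - monomial b 1 : MvPolynomial σ K) ∈ Ideal.span G) :
    ∀ f : MvPolynomial σ K, Phi K d f = 0 → f ∈ Ideal.span G := by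
  classical
  intro f
  generalize hn : f.support.card = n
  induction n using Nat.strong_induction_on generalizing f with
  | _ n IH =>
  intro hf
  rcases eq_or_ne f 0 with rfl | hf0
  · exact Ideal.zero_mem _
  have hsupp : f.support.Nonempty := support_nonempty.mpr hf0
  obtain ⟨a₀, ha₀⟩ := hsupp
  set D : (σ →₀ ℕ) → (α →₀ ℕ) := fun u => W d u.toMultiset with hD
  have hphi : Phi K d f
      = ∑ u ∈ f.support, monomial (D u) (coeff u f) := by
    conv_lhs => rw [f.as_sum]
    rw [map_sum]
    exact Finset.sum_congr rfl fun u _ => aeval_monomial_c u (coeff u f)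
  have hcoeff : ∑ u ∈ f.support.filter (fun u => D u = D a₀), coeff u f = 0 := by
    have h0 : coeff (D a₀) (∑ u ∈ f.support, monomial (D u) (coeff u f)) = 0 := by
      rw [← hphi, hf, coeff_zero]
    rw [coeff_sum] at h0
    simp only [coeff_monomial] at h0
    rw [Finset.sum_filter]
    convert h0 using 2
  have hb : ∃ b ∈ f.support.filter (fun u => D u = D a₀), b ≠ a₀ := by
    by_contra h
    push_neg at h
    have ht : f.support.filter (fun u => D u = D a₀) = {a₀} := by
      apply Finset.eq_singleton_iff_unique_mem.mpr
      exact ⟨Finset.mem_filter.mpr ⟨ha₀, rfl⟩, h⟩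
    rw [ht, Finset.sum_singleton] at hcoeff
    exact (mem_support_iff.mp ha₀) hcoeff
  obtain ⟨b, hbmem, hbne⟩ := hb
  obtain ⟨hbsupp, hbD⟩ := Finset.mem_filter.mp hbmem
  set cc := coeff a₀ f with hcc
  set g : MvPolynomial σ K := monomial a₀ 1 - monomial b 1 with hg
  have hgspan : g ∈ Ideal.span G := hbin a₀ b (hbD.symm)
  set f' := f - C cc * g with hf'
  have hkerg : Phi K d g = 0 := by
    rw [hg, map_sub, aeval_monomial1, aeval_monomial1,
      show W d (Finsupp.toMultiset a₀) = D a₀ from rfl,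
      show W d (Finsupp.toMultiset b) = D b from rfl, hbD, sub_self]
  have hf'ker : Phi K d f' = 0 := by
    rw [hf', map_sub, map_mul, hkerg, mul_zero, hf, sub_zero]
  have hcoefff' : ∀ u, coeff u f' = coeff u f - (if a₀ = u then cc else 0)
      + (if b = u then cc else 0) := by
    intro u
    rw [hf', hg, mul_sub, coeff_sub, coeff_sub, C_mul_monomial, C_mul_monomial, mul_one,
      coeff_monomial, coeff_monomial]
    ring
  have hsub : f'.support ⊆ f.support.erase a₀ := by
    intro u hu
    rw [mem_support_iff] at hu
    rw [Finset.mem_erase]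
    constructor
    · rintro rfl
      rw [hcoefff' u, if_pos rfl, if_neg hbne, sub_self, zero_add] at hu
      exact hu rfl
    · by_contra husupp
      rw [mem_support_iff, not_not] at husupp
      rcases eq_or_ne b u with rfl | hbu
      · exact absurd husupp (mem_support_iff.mp hbsupp)
      · rcases eq_or_ne a₀ u with rfl | hau
        · exact absurd husupp (mem_support_iff.mp ha₀)
        · rw [hcoefff' u, if_neg hau, if_neg hbu, husupp] at hu
          simp at hu
  have hcard : f'.support.card < n := by
    calc f'.support.card ≤ (f.support.erase a₀).card := Finset.card_le_card hsub
    _ < f.support.card := Finset.card_erase_lt_of_mem ha₀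
    _ = n := hn
  have hf'span : f' ∈ Ideal.span G := IH _ hcard f' rfl hf'ker
  have : f = f' + C cc * g := by rw [hf']; ring
  rw [this]
  exact Ideal.add_mem _ hf'span (Ideal.mul_mem_left _ _ hgspan)
def IsQuadBinomialSet' {σ K : Type} [Field K] (G : Set (MvPolynomial σ K)) : Prop :=
  ∀ f ∈ G, ∃ i j k l : σ, f = X i * X j - X k * X l

/-- one quadratic move -/
def QRel (G : Set (MvPolynomial σ K)) (m m' : Multiset σ) : Prop :=
  ∃ i j k l w, (X i * X j - X k * X l) ∈ G ∧ m = i ::ₘ j ::ₘ w ∧ m' = k ::ₘ l ::ₘ w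

lemma span_binomial_connect (G : Set (MvPolynomial σ K)) (hG : IsQuadBinomialSet' G)
    {m m' : Multiset σ} (h : (mon m - mon m' : MvPolynomial σ K) ∈ Ideal.span G) :
    Relation.EqvGen (QRel G) m m' := by
  classical
  set q : (σ →₀ ℕ) → Quot (QRel G) := fun u => Quot.mk _ u.toMultiset with hq
  set T : MvPolynomial σ K →ₗ[K] (Quot (QRel G) →₀ K) := Finsupp.lmapDomain K K q ∘ₗ (AddMonoidAlgebra.coeffLinearEquiv K).toLinearMap with hT
  have hTmon : ∀ (u : σ →₀ ℕ) (c : K), T (monomial u c) = Finsupp.single (q u) c := by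
    intro u c
    rw [hT]
    show Finsupp.mapDomain q (AddMonoidAlgebra.coeff (monomial u c)) = _
    rw [← single_eq_monomial, AddMonoidAlgebra.coeff_single, Finsupp.mapDomain_single]
  have key : ∀ g ∈ G, ∀ p : MvPolynomial σ K, T (p * g) = 0 := by
    intro g hg p
    obtain ⟨i, j, k, l, rfl⟩ := hG g hg
    induction p using MvPolynomial.induction_on' with
    | add p1 p2 ih1 ih2 => rw [add_mul, map_add, ih1, ih2, add_zero]
    | monomial u c =>
      have e1 : X i * X j = (monomial (Finsupp.single i 1 + Finsupp.single j 1) 1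
          : MvPolynomial σ K) := by
        rw [X, X, monomial_mul, mul_one]
      have e2 : X k * X l = (monomial (Finsupp.single k 1 + Finsupp.single l 1) 1
          : MvPolynomial σ K) := by
        rw [X, X, monomial_mul, mul_one]
      rw [mul_sub, e1, e2, monomial_mul, monomial_mul, mul_one, map_sub, hTmon, hTmon]
      have hq1 : q (u + (Finsupp.single i 1 + Finsupp.single j 1))
          = q (u + (Finsupp.single k 1 + Finsupp.single l 1)) := by
        apply Quot.sound
        refine ⟨i, j, k, l, u.toMultiset, hg, ?_, ?_⟩ <;>
          · rw [Finsupp.toMultiset_add, Finsupp.toMultiset_add, Finsupp.toMultiset_single,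
              Finsupp.toMultiset_single, one_nsmul, one_nsmul, ← Multiset.singleton_add,
              ← Multiset.singleton_add]
            abel
      rw [hq1, sub_self]
  have hT0 : T (mon m - mon m') = 0 := by
    obtain ⟨cf, hcfsupp, hcfsum⟩ := Submodule.mem_span_set.mp h
    rw [← hcfsum]
    rw [Finsupp.sum, map_sum]
    apply Finset.sum_eq_zero
    intro g hgmem
    exact key g (hcfsupp hgmem) (cf g)
  -- conclude
  have hmm : m = (Multiset.toFinsupp m).toMultiset := by simp
  have hmm' : m' = (Multiset.toFinsupp m').toMultiset := by simp
  rw [map_sub] at hT0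
  rw [hmm, hmm', mon_toMultiset, mon_toMultiset, hTmon, hTmon] at hT0
  have : q (Multiset.toFinsupp m) = q (Multiset.toFinsupp m') := by
    by_contra hne
    have := congrFun (congrArg (⇑) (sub_eq_zero.mp hT0)) (q (Multiset.toFinsupp m))
    rw [Finsupp.single_apply, Finsupp.single_apply, if_pos rfl, if_neg (Ne.symm hne)] at this
    exact one_ne_zero this
  have : Quot.mk (QRel G) m = Quot.mk (QRel G) m' := by
    rw [hmm, hmm']; exact this
  exact Quot.eqvGen_exact this
end Aux





section MSec
variable {α : Type} [Fintype α] [DecidableEq α] {M₁ M₂ MS M2s : Matroid α} {c : α}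

/-- Base characterization of the 2-sum. -/
lemma twoSum_base_iff (hE : M₁.E ∩ M₂.E = {c})
    (hl1 : ¬ IsLoopElem M₁ c) (hc2 : ¬ IsColoopElem M₂ c)
    (hSE : MS.E = M₁.E ∪ M₂.E)
    (hS : ∀ S : Set α, MS.IsBase S ↔
      ∃ B D, M₁.IsBase B ∧ M₂.IsBase D ∧ Disjoint B D ∧ S = B ∪ D)
    (h2s : IsContractionOf M2s MS c) :
    ∀ S : Set α, M2s.IsBase S ↔ (S ⊆ MS.E \ {c} ∧ MS.IsBase (S ∪ {c})) := by
  obtain ⟨hE', hB'⟩ := h2s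
  have hc1E : c ∈ M₁.E := by
    have : c ∈ M₁.E ∩ M₂.E := by rw [hE]; rfl
    exact this.1
  have hcMS : c ∈ MS.E := by rw [hSE]; exact Or.inl hc1E
  -- a base of MS containing c
  have hBc : ∃ B, M₁.IsBase B ∧ c ∈ B := by
    by_contra h
    push_neg at h
    exact hl1 ⟨hc1E, h⟩
  obtain ⟨B, hB, hcB⟩ := hBc
  have hDc : ∃ D, M₂.IsBase D ∧ c ∉ D := by
    by_contra h
    push_neg at h
    exact hc2 h
  obtain ⟨D, hD, hcD⟩ := hDc
  have hdisj : Disjoint B D := by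
    rw [Set.disjoint_left]
    intro e heB heD
    have : e ∈ M₁.E ∩ M₂.E := ⟨hB.subset_ground heB, hD.subset_ground heD⟩
    rw [hE] at this
    exact hcD (this ▸ heD)
  have hBD : MS.IsBase (B ∪ D) := (hS _).mpr ⟨B, D, hB, hD, hdisj, rfl⟩
  have hBDsub : B ∪ D ⊆ MS.E := hBD.subset_ground
  -- c is not a coloop of MS✶
  have hnc : ¬ IsColoopElem MS✶ c := by
    intro h
    have hbase : MS✶.IsBase (MS.E \ (B ∪ D)) := by
      rw [Matroid.dual_isBase_iff (Set.diff_subset)]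
      rw [Set.diff_diff_cancel_left hBDsub]
      exact hBD
    have := h _ hbase
    exact this.2 (Set.mem_union_left _ hcB)
  intro S
  have hdd : M2s.IsBase S ↔ M2s✶✶.IsBase S := by rw [Matroid.dual_dual]
  rw [hdd, Matroid.dual_isBase_iff']
  rw [hB' (M2s✶.E \ S)]
  have hgr : M2s✶.E = MS.E \ {c} := by
    rw [hE']; rfl
  constructor
  · rintro ⟨h1, hsub⟩
    rcases h1 with ⟨hcl, _⟩ | ⟨_, hbase, _⟩
    · exact absurd hcl hnc
    · rw [hgr] at hsub hbase
      have hsub' : (MS.E \ {c}) \ S ⊆ MS.E := (Set.diff_subset).trans Set.diff_subset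
      rw [Matroid.dual_isBase_iff hsub'] at hbase
      have heq : MS.E \ ((MS.E \ {c}) \ S) = S ∪ {c} := by
        ext e
        constructor
        · rintro ⟨heE, hne⟩
          by_cases hec : e = c
          · exact Or.inr (by simp [hec])
          · left
            by_contra heS
            exact hne ⟨⟨heE, by simp [hec]⟩, heS⟩
        · rintro (heS | hec)
          · have := hsub heS
            exact ⟨this.1, fun h => h.2 heS⟩
          · simp only [Set.mem_singleton_iff] at hec
            subst hec
            exact ⟨hcMS, fun h => h.1.2 rfl⟩
      rw [heq] at hbase
      exact ⟨hsub, hbase⟩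
  · rintro ⟨hsub, hbase⟩
    rw [hgr]
    refine ⟨Or.inr ⟨hnc, ?_, ?_⟩, hsub⟩
    · have hsub' : (MS.E \ {c}) \ S ⊆ MS.E := (Set.diff_subset).trans Set.diff_subset
      rw [Matroid.dual_isBase_iff hsub']
      have heq : MS.E \ ((MS.E \ {c}) \ S) = S ∪ {c} := by
        ext e
        constructor
        · rintro ⟨heE, hne⟩
          by_cases hec : e = c
          · exact Or.inr (by simp [hec])
          · left
            by_contra heS
            exact hne ⟨⟨heE, by simp [hec]⟩, heS⟩
        · rintro (heS | hec)
          · have := hsub heS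
            exact ⟨this.1, fun h => h.2 heS⟩
          · simp only [Set.mem_singleton_iff] at hec
            subst hec
            exact ⟨hcMS, fun h => h.1.2 rfl⟩
      rw [heq]
      exact hbase
    · exact fun h => h.1.2 rfl
end MSec

section Pairs
variable {α : Type} [Fintype α] [DecidableEq α] {M₁ M₂ MS M2s : Matroid α} {c : α}

/-- admissible pair -/
def Adm (M₁ M₂ : Matroid α) (c : α) (B D : Finset α) : Prop :=
  M₁.IsBase ↑B ∧ M₂.IsBase ↑D ∧ (c ∈ B ↔ c ∉ D)

lemma adm_disjoint (hE : M₁.E ∩ M₂.E = {c}) {B D : Finset α} (hA : Adm M₁ M₂ c B D) :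
    Disjoint B D := by
  rw [Finset.disjoint_left]
  intro e heB heD
  have : e ∈ M₁.E ∩ M₂.E := ⟨hA.1.subset_ground heB, hA.2.1.subset_ground heD⟩
  rw [hE, Set.mem_singleton_iff] at this
  subst this
  exact (hA.2.2.mp heB) heD

lemma adm_c_mem {B D : Finset α} (hA : Adm M₁ M₂ c B D) : c ∈ B ∪ D := by
  by_cases h : c ∈ D
  · exact Finset.mem_union_right _ h
  · exact Finset.mem_union_left _ (hA.2.2.mpr h)

lemma base_card_eq {M : Matroid α} {B B' : Finset α} (h : M.IsBase ↑B) (h' : M.IsBase ↑B') :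
    B.card = B'.card := by
  have := h.ncard_eq_ncard_of_isBase h'
  simpa [Set.ncard_coe_finset] using this

lemma base_iff_adm (hE : M₁.E ∩ M₂.E = {c})
    (hl1 : ¬ IsLoopElem M₁ c) (hc2 : ¬ IsColoopElem M₂ c)
    (hSE : MS.E = M₁.E ∪ M₂.E)
    (hS : ∀ S : Set α, MS.IsBase S ↔
      ∃ B D, M₁.IsBase B ∧ M₂.IsBase D ∧ Disjoint B D ∧ S = B ∪ D)
    (h2s : IsContractionOf M2s MS c) (S : Finset α) :
    M2s.IsBase ↑S ↔ ∃ B D : Finset α, Adm M₁ M₂ c B D ∧ S = (B ∪ D).erase c := by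
  rw [twoSum_base_iff hE hl1 hc2 hSE hS h2s]
  constructor
  · rintro ⟨hsub, hbase⟩
    obtain ⟨Bs, Ds, hB, hD, hdisj, hun⟩ := (hS _).mp hbase
    refine ⟨(Set.toFinite Bs).toFinset, (Set.toFinite Ds).toFinset, ⟨?_, ?_, ?_⟩, ?_⟩
    · rwa [Set.Finite.coe_toFinset]
    · rwa [Set.Finite.coe_toFinset]
    · simp only [Set.Finite.mem_toFinset]
      have hcBD : c ∈ Bs ∪ Ds := by rw [← hun]; exact Or.inr rfl
      constructor
      · intro hcB hcD
        exact (Set.disjoint_left.mp hdisj) hcB hcD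
      · intro hcD
        rcases hcBD with h | h
        · exact h
        · exact absurd h hcD
    · apply Finset.coe_injective
      rw [Finset.coe_erase, Finset.coe_union, Set.Finite.coe_toFinset, Set.Finite.coe_toFinset,
        ← hun]
      have hcS : c ∉ (S : Set α) := fun h => (hsub h).2 rfl
      ext e
      constructor
      · intro he
        exact ⟨Or.inl he, fun hec => hcS (hec ▸ he)⟩
      · rintro ⟨he | he, hne⟩
        · exact he
        · exact absurd he hne
  · rintro ⟨B, D, hA, rfl⟩
    have hdisj : Disjoint (↑B : Set α) ↑D := by
      rw [Set.disjoint_left]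
      intro e heB heD
      exact (Finset.disjoint_left.mp (adm_disjoint hE hA)) heB heD
    have hcBD : c ∈ B ∪ D := adm_c_mem hA
    have hun : ((((B ∪ D).erase c : Finset α) : Set α)) ∪ {c} = (↑B ∪ ↑D : Set α) := by
      rw [Finset.coe_erase, Finset.coe_union]
      ext e
      constructor
      · rintro (⟨he, _⟩ | he)
        · exact he
        · rw [Set.mem_singleton_iff] at he
          subst he
          rcases Finset.mem_union.mp hcBD with h | h
          · exact Or.inl (by exact_mod_cast h)
          · exact Or.inr (by exact_mod_cast h)
      · intro he
        by_cases hec : e = c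
        · exact Or.inr (by simp [hec])
        · exact Or.inl ⟨he, by simp [hec]⟩
    constructor
    · intro e he
      rw [Finset.mem_coe, Finset.mem_erase] at he
      refine ⟨?_, he.1⟩
      rw [hSE]
      rcases Finset.mem_union.mp he.2 with h | h
      · exact Or.inl (hA.1.subset_ground h)
      · exact Or.inr (hA.2.1.subset_ground h)
    · rw [hun]
      exact (hS _).mpr ⟨↑B, ↑D, hA.1, hA.2.1, hdisj, rfl⟩

lemma adm_unique (hE : M₁.E ∩ M₂.E = {c}) {B D B' D' : Finset α}
    (hA : Adm M₁ M₂ c B D) (hA' : Adm M₁ M₂ c B' D')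
    (h : (B ∪ D).erase c = (B' ∪ D').erase c) : B = B' ∧ D = D' := by
  have hBmem : ∀ e, e ≠ c → (e ∈ B ↔ e ∈ B') := by
    intro e hec
    constructor
    · intro heB
      have : e ∈ (B' ∪ D').erase c := by
        rw [← h, Finset.mem_erase]
        exact ⟨hec, Finset.mem_union_left _ heB⟩
      rcases Finset.mem_union.mp (Finset.mem_erase.mp this).2 with h' | h'
      · exact h'
      · exfalso
        have : e ∈ M₁.E ∩ M₂.E := ⟨hA.1.subset_ground heB, hA'.2.1.subset_ground h'⟩
        rw [hE, Set.mem_singleton_iff] at this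
        exact hec this
    · intro heB
      have : e ∈ (B ∪ D).erase c := by
        rw [h, Finset.mem_erase]
        exact ⟨hec, Finset.mem_union_left _ heB⟩
      rcases Finset.mem_union.mp (Finset.mem_erase.mp this).2 with h' | h'
      · exact h'
      · exfalso
        have : e ∈ M₁.E ∩ M₂.E := ⟨hA'.1.subset_ground heB, hA.2.1.subset_ground h'⟩
        rw [hE, Set.mem_singleton_iff] at this
        exact hec this
  have hDmem : ∀ e, e ≠ c → (e ∈ D ↔ e ∈ D') := by
    intro e hec
    constructor
    · intro heD
      have : e ∈ (B' ∪ D').erase c := by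
        rw [← h, Finset.mem_erase]
        exact ⟨hec, Finset.mem_union_right _ heD⟩
      rcases Finset.mem_union.mp (Finset.mem_erase.mp this).2 with h' | h'
      · exfalso
        have : e ∈ M₁.E ∩ M₂.E := ⟨hA'.1.subset_ground h', hA.2.1.subset_ground heD⟩
        rw [hE, Set.mem_singleton_iff] at this
        exact hec this
      · exact h'
    · intro heD
      have : e ∈ (B ∪ D).erase c := by
        rw [h, Finset.mem_erase]
        exact ⟨hec, Finset.mem_union_right _ heD⟩
      rcases Finset.mem_union.mp (Finset.mem_erase.mp this).2 with h' | h'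
      · exfalso
        have : e ∈ M₁.E ∩ M₂.E := ⟨hA.1.subset_ground h', hA'.2.1.subset_ground heD⟩
        rw [hE, Set.mem_singleton_iff] at this
        exact hec this
      · exact h'
  have herase : B.erase c = B'.erase c := by
    ext e
    rw [Finset.mem_erase, Finset.mem_erase]
    exact and_congr_right fun hec => hBmem e hec
  have hcards : B.card = B'.card := base_card_eq hA.1 hA'.1
  have hcB : c ∈ B ↔ c ∈ B' := by
    constructor
    · intro hcB
      by_contra hcB'
      have h1 : (B.erase c).card + 1 = B.card := Finset.card_erase_add_one hcB
      have h2 : B'.erase c = B' := Finset.erase_eq_of_notMem hcB'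
      rw [herase, h2] at h1
      omega
    · intro hcB'
      by_contra hcB
      have h1 : (B'.erase c).card + 1 = B'.card := Finset.card_erase_add_one hcB'
      have h2 : B.erase c = B := Finset.erase_eq_of_notMem hcB
      rw [← herase, h2] at h1
      omega
  have hB : B = B' := by
    ext e
    by_cases hec : e = c
    · subst hec; exact hcB
    · exact hBmem e hec
  refine ⟨hB, ?_⟩
  ext e
  by_cases hec : e = c
  · subst hec
    rw [← not_iff_not, ← hA.2.2, ← hA'.2.2, hB]
  · exact hDmem e hec

lemma ind_union_disjoint {B D : Finset α} (h : Disjoint B D) :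
    ind (B ∪ D) = ind B + ind D := by
  ext e
  rw [Finsupp.add_apply, ind_apply, ind_apply, ind_apply]
  by_cases heB : e ∈ B
  · have : e ∉ D := Finset.disjoint_left.mp h heB
    simp [heB, this]
  · by_cases heD : e ∈ D <;> simp [heB, heD]

lemma ind_erase {b : Finset α} (h : c ∈ b) :
    ind (b.erase c) + Finsupp.single c 1 = ind b := by
  ext e
  rw [Finsupp.add_apply, ind_apply, ind_apply, Finsupp.single_apply]
  simp only [Finset.mem_erase]
  by_cases hec : e = c
  · subst hec; simp [h]
  · simp [hec, Ne.symm hec]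

lemma adm_ind {B D : Finset α} (hE : M₁.E ∩ M₂.E = {c}) (hA : Adm M₁ M₂ c B D) :
    ind ((B ∪ D).erase c) + Finsupp.single c 1 = ind B + ind D := by
  rw [ind_erase (adm_c_mem hA), ind_union_disjoint (adm_disjoint hE hA)]

lemma adm_card {B D : Finset α} (hE : M₁.E ∩ M₂.E = {c}) (hA : Adm M₁ M₂ c B D) :
    ((B ∪ D).erase c).card + 1 = B.card + D.card := by
  rw [Finset.card_erase_add_one (adm_c_mem hA),
    Finset.card_union_of_disjoint (adm_disjoint hE hA)]
end Pairs

section TotalSec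
variable {α : Type} [Fintype α] [DecidableEq α]

noncomputable def total (w : α →₀ ℕ) : ℕ := ∑ e, w e

lemma total_add (w w' : α →₀ ℕ) : total (w + w') = total w + total w' := by
  simp [total, Finset.sum_add_distrib]

lemma total_ind (b : Finset α) : total (ind b) = b.card := by
  simp only [total, ind_apply]
  rw [Finset.sum_ite_mem, Finset.univ_inter, Finset.sum_const, smul_eq_mul, mul_one]

lemma total_single (c : α) : total (Finsupp.single c 1) = 1 := by
  simp [total, Finsupp.single_apply]
end TotalSec

structure TwoSumSetup (α : Type) [Fintype α] [DecidableEq α] where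
  M₁ : Matroid α
  M₂ : Matroid α
  MS : Matroid α
  M2s : Matroid α
  c : α
  hE : M₁.E ∩ M₂.E = {c}
  hl1 : ¬ IsLoopElem M₁ c
  hc1 : ¬ IsColoopElem M₁ c
  hl2 : ¬ IsLoopElem M₂ c
  hc2 : ¬ IsColoopElem M₂ c
  hSE : MS.E = M₁.E ∪ M₂.E
  hS : ∀ S : Set α, MS.IsBase S ↔ ∃ B D, M₁.IsBase B ∧ M₂.IsBase D ∧ Disjoint B D ∧ S = B ∪ D
  h2s : IsContractionOf M2s MS c

namespace TwoSumSetup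
variable {α : Type} [Fintype α] [DecidableEq α] (T : TwoSumSetup α)

abbrev σN := {S : Finset α // T.M2s.IsBase ↑S}
abbrev σ1 := {B : Finset α // T.M₁.IsBase ↑B}
abbrev σ2 := {D : Finset α // T.M₂.IsBase ↑D}

lemma base_iff (S : Finset α) :
    T.M2s.IsBase ↑S ↔ ∃ B D : Finset α, Adm T.M₁ T.M₂ T.c B D ∧ S = (B ∪ D).erase T.c :=
  base_iff_adm T.hE T.hl1 T.hc2 T.hSE T.hS T.h2s S

noncomputable def decB (s : T.σN) : Finset α := ((T.base_iff s.1).mp s.2).choose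

noncomputable def decD (s : T.σN) : Finset α :=
  ((T.base_iff s.1).mp s.2).choose_spec.choose

lemma dec_spec (s : T.σN) : Adm T.M₁ T.M₂ T.c (T.decB s) (T.decD s) ∧
    s.1 = ((T.decB s ∪ T.decD s)).erase T.c :=
  ((T.base_iff s.1).mp s.2).choose_spec.choose_spec

noncomputable def bmv (s : T.σN) : T.σ1 := ⟨T.decB s, (T.dec_spec s).1.1⟩
noncomputable def dmv (s : T.σN) : T.σ2 := ⟨T.decD s, (T.dec_spec s).1.2.1⟩

def mkv {B D : Finset α} (hA : Adm T.M₁ T.M₂ T.c B D) : T.σN :=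
  ⟨(B ∪ D).erase T.c, (T.base_iff _).mpr ⟨B, D, hA, rfl⟩⟩

lemma dec_mk {B D : Finset α} (hA : Adm T.M₁ T.M₂ T.c B D) :
    T.decB (T.mkv hA) = B ∧ T.decD (T.mkv hA) = D := by
  have h := T.dec_spec (T.mkv hA)
  have : ((T.decB (T.mkv hA) ∪ T.decD (T.mkv hA))).erase T.c = (B ∪ D).erase T.c := by
    rw [← h.2]; rfl
  exact adm_unique T.hE h.1 hA this

lemma var_ext {s t : T.σN} (hB : T.decB s = T.decB t) (hD : T.decD s = T.decD t) : s = t := by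
  apply Subtype.ext
  rw [(T.dec_spec s).2, (T.dec_spec t).2, hB, hD]

/-- the basis finset of a variable of `M2s` -/
def dN : T.σN → Finset α := fun s => s.1
def d1 : T.σ1 → Finset α := fun b => b.1
def d2 : T.σ2 → Finset α := fun d => d.1

noncomputable def bm (m : Multiset T.σN) : Multiset T.σ1 := m.map T.bmv
noncomputable def dm (m : Multiset T.σN) : Multiset T.σ2 := m.map T.dmv

lemma ind_dec (s : T.σN) :
    ind (T.dN s) + Finsupp.single T.c 1 = ind (T.decB s) + ind (T.decD s) := by
  have h := T.dec_spec s
  have : T.dN s = ((T.decB s ∪ T.decD s)).erase T.c := h.2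
  rw [this]
  exact adm_ind T.hE h.1

/-- ranks -/
noncomputable def r1 : ℕ := ((Set.toFinite (T.M₁.exists_isBase.choose)).toFinset).card
noncomputable def r2 : ℕ := ((Set.toFinite (T.M₂.exists_isBase.choose)).toFinset).card

lemma card_base1 {B : Finset α} (h : T.M₁.IsBase ↑B) : B.card = T.r1 := by
  apply base_card_eq h
  rw [Set.Finite.coe_toFinset]
  exact T.M₁.exists_isBase.choose_spec

lemma card_base2 {D : Finset α} (h : T.M₂.IsBase ↑D) : D.card = T.r2 := by
  apply base_card_eq h
  rw [Set.Finite.coe_toFinset]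
  exact T.M₂.exists_isBase.choose_spec

lemma c_mem_E1 : T.c ∈ T.M₁.E := by
  have : T.c ∈ T.M₁.E ∩ T.M₂.E := by rw [T.hE]; rfl
  exact this.1

lemma c_mem_E2 : T.c ∈ T.M₂.E := by
  have : T.c ∈ T.M₁.E ∩ T.M₂.E := by rw [T.hE]; rfl
  exact this.2

lemma exists_base1_c : ∃ B : Finset α, T.M₁.IsBase ↑B ∧ T.c ∈ B := by
  have : ∃ B, T.M₁.IsBase B ∧ T.c ∈ B := by
    by_contra h
    push_neg at h
    exact T.hl1 ⟨T.c_mem_E1, h⟩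
  obtain ⟨B, hB, hc⟩ := this
  refine ⟨(Set.toFinite B).toFinset, ?_, ?_⟩
  · rwa [Set.Finite.coe_toFinset]
  · rwa [Set.Finite.mem_toFinset]

lemma r1_pos : 1 ≤ T.r1 := by
  obtain ⟨B, hB, hc⟩ := T.exists_base1_c
  rw [← T.card_base1 hB]
  exact Finset.card_pos.mpr ⟨T.c, hc⟩

lemma exists_base2_c : ∃ D : Finset α, T.M₂.IsBase ↑D ∧ T.c ∈ D := by
  have : ∃ D, T.M₂.IsBase D ∧ T.c ∈ D := by
    by_contra h
    push_neg at h
    exact T.hl2 ⟨T.c_mem_E2, h⟩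
  obtain ⟨D, hD, hc⟩ := this
  refine ⟨(Set.toFinite D).toFinset, ?_, ?_⟩
  · rwa [Set.Finite.coe_toFinset]
  · rwa [Set.Finite.mem_toFinset]

lemma r2_pos : 1 ≤ T.r2 := by
  obtain ⟨D, hD, hc⟩ := T.exists_base2_c
  rw [← T.card_base2 hD]
  exact Finset.card_pos.mpr ⟨T.c, hc⟩

lemma card_varN (s : T.σN) : (T.dN s).card + 1 = T.r1 + T.r2 := by
  have h := T.dec_spec s
  have := adm_card T.hE h.1
  rw [show T.dN s = _ from h.2]
  rw [this, T.card_base1 h.1.1, T.card_base2 h.1.2.1]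

/-- splitting of the weight -/
lemma W_split (m : Multiset T.σN) :
    W T.d1 (T.bm m) + W T.d2 (T.dm m)
      = W T.dN m + (Multiset.card m) • Finsupp.single T.c 1 := by
  induction m using Multiset.induction with
  | empty => simp [W, bm, dm]
  | cons s m ih =>
    rw [bm, dm, Multiset.map_cons, Multiset.map_cons, ← bm, ← dm, W_cons, W_cons, W_cons]
    have hd : ind (T.d1 (T.bmv s)) = ind (T.decB s) := rfl
    have hd2 : ind (T.d2 (T.dmv s)) = ind (T.decD s) := rfl
    rw [hd, hd2, Multiset.card_cons]
    have := T.ind_dec s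
    calc ind (T.decB s) + W T.d1 (T.bm m) + (ind (T.decD s) + W T.d2 (T.dm m))
        = (ind (T.decB s) + ind (T.decD s)) + (W T.d1 (T.bm m) + W T.d2 (T.dm m)) := by
          abel
      _ = (ind (T.dN s) + Finsupp.single T.c 1) + (W T.dN m
            + (Multiset.card m) • Finsupp.single T.c 1) := by rw [← this, ih]
      _ = ind (T.dN s) + W T.dN m + (Multiset.card m + 1) • Finsupp.single T.c 1 := by
          rw [add_smul, one_smul]; abel

lemma total_W_N (m : Multiset T.σN) :
    total (W T.dN m) + Multiset.card m = Multiset.card m * (T.r1 + T.r2) := by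
  induction m using Multiset.induction with
  | empty => simp [W, total]
  | cons s m ih =>
    rw [W_cons, total_add, total_ind, Multiset.card_cons]
    have := T.card_varN s
    have h2 : (Multiset.card m + 1) * (T.r1 + T.r2)
        = Multiset.card m * (T.r1 + T.r2) + (T.r1 + T.r2) := by ring
    omega

lemma card_eq_of_W_eq {m m' : Multiset T.σN} (h : W T.dN m = W T.dN m') :
    Multiset.card m = Multiset.card m' := by
  have h1 := T.total_W_N m
  have h2 := T.total_W_N m'
  rw [h] at h1
  have hR : 2 ≤ T.r1 + T.r2 := by
    have := T.r1_pos
    have := T.r2_pos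
    omega
  set R := T.r1 + T.r2 with hRdef
  set t := total (W T.dN m')
  set a := Multiset.card m
  set b := Multiset.card m'
  have key : a * R + b = b * R + a := by omega
  rcases Nat.lt_trichotomy a b with hlt | heq | hgt
  · nlinarith
  · exact heq
  · nlinarith

lemma total_W1 (μ : Multiset T.σ1) : total (W T.d1 μ) = Multiset.card μ * T.r1 := by
  induction μ using Multiset.induction with
  | empty => simp [W, total]
  | cons s μ ih =>
    have hc : (T.d1 s).card = T.r1 := T.card_base1 s.2
    rw [W_cons, total_add, total_ind, Multiset.card_cons, hc, ih]
    ring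

lemma total_W2 (μ : Multiset T.σ2) : total (W T.d2 μ) = Multiset.card μ * T.r2 := by
  induction μ using Multiset.induction with
  | empty => simp [W, total]
  | cons s μ ih =>
    have hc : (T.d2 s).card = T.r2 := T.card_base2 s.2
    rw [W_cons, total_add, total_ind, Multiset.card_cons, hc, ih]
    ring

lemma W1_support (μ : Multiset T.σ1) (e : α) (he : e ∉ T.M₁.E) : W T.d1 μ e = 0 := by
  induction μ using Multiset.induction with
  | empty => simp [W]
  | cons s μ ih =>
    rw [W_cons, Finsupp.add_apply, ih, add_zero, ind_apply]
    have : e ∉ T.d1 s := fun h => he (s.2.subset_ground h)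
    simp [this]

lemma W2_support (μ : Multiset T.σ2) (e : α) (he : e ∉ T.M₂.E) : W T.d2 μ e = 0 := by
  induction μ using Multiset.induction with
  | empty => simp [W]
  | cons s μ ih =>
    rw [W_cons, Finsupp.add_apply, ih, add_zero, ind_apply]
    have : e ∉ T.d2 s := fun h => he (s.2.subset_ground h)
    simp [this]

end TwoSumSetup

namespace TwoSumSetup
variable {α : Type} [Fintype α] [DecidableEq α] (T : TwoSumSetup α)

lemma W_eq_split {m m' : Multiset T.σN} (h : W T.dN m = W T.dN m') :
    W T.d1 (T.bm m) = W T.d1 (T.bm m') ∧ W T.d2 (T.dm m) = W T.d2 (T.dm m') := by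
  have hcard : Multiset.card m = Multiset.card m' := T.card_eq_of_W_eq h
  have hsum : W T.d1 (T.bm m) + W T.d2 (T.dm m)
      = W T.d1 (T.bm m') + W T.d2 (T.dm m') := by
    rw [T.W_split, T.W_split, h, hcard]
  have hstep : ∀ e, e ≠ T.c → W T.d1 (T.bm m) e = W T.d1 (T.bm m') e := by
    intro e hec
    by_cases he1 : e ∈ T.M₁.E
    · have he2 : e ∉ T.M₂.E := by
        intro he2
        have : e ∈ T.M₁.E ∩ T.M₂.E := ⟨he1, he2⟩
        rw [T.hE, Set.mem_singleton_iff] at this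
        exact hec this
      have hp := DFunLike.congr_fun hsum e
      rw [Finsupp.add_apply, Finsupp.add_apply, T.W2_support _ e he2,
        T.W2_support _ e he2] at hp
      omega
    · rw [T.W1_support _ e he1, T.W1_support _ e he1]
  have hbcard : Multiset.card (T.bm m) = Multiset.card (T.bm m') := by
    rw [bm, bm, Multiset.card_map, Multiset.card_map, hcard]
  have htot : total (W T.d1 (T.bm m)) = total (W T.d1 (T.bm m')) := by
    rw [T.total_W1, T.total_W1, hbcard]
  have hc : W T.d1 (T.bm m) T.c = W T.d1 (T.bm m') T.c := by
    have h1 : W T.d1 (T.bm m) T.c + ∑ e ∈ Finset.univ.erase T.c, W T.d1 (T.bm m) e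
        = total (W T.d1 (T.bm m)) :=
      Finset.add_sum_erase _ _ (Finset.mem_univ T.c)
    have h2 : W T.d1 (T.bm m') T.c + ∑ e ∈ Finset.univ.erase T.c, W T.d1 (T.bm m') e
        = total (W T.d1 (T.bm m')) :=
      Finset.add_sum_erase _ _ (Finset.mem_univ T.c)
    have h3 : ∑ e ∈ Finset.univ.erase T.c, W T.d1 (T.bm m) e
        = ∑ e ∈ Finset.univ.erase T.c, W T.d1 (T.bm m') e :=
      Finset.sum_congr rfl fun e he => hstep e (Finset.mem_erase.mp he).1
    omega
  have hW1 : W T.d1 (T.bm m) = W T.d1 (T.bm m') := by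
    ext e
    by_cases hec : e = T.c
    · subst hec; exact hc
    · exact hstep e hec
  refine ⟨hW1, ?_⟩
  have := hsum
  rw [hW1] at this
  exact add_left_cancel this

variable (K : Type) [Field K]

/-- the set of all quadratic binomials in the toric ideal of the 2-sum -/
def GN : Set (MvPolynomial T.σN K) :=
  {f | (∃ i j k l, f = X i * X j - X k * X l) ∧ f ∈ matroidToricIdeal K T.M2s}

lemma GN_sub : ∀ f ∈ T.GN K, f ∈ matroidToricIdeal K T.M2s :=
  fun _ hf => hf.2

lemma toricN_eq : (matroidToricMap K T.M2s : MvPolynomial T.σN K →ₐ[K] MvPolynomial α K)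
    = Phi K T.dN := rfl

lemma mem_JN_iff (f : MvPolynomial T.σN K) :
    f ∈ matroidToricIdeal K T.M2s ↔ Phi K T.dN f = 0 := by
  rw [matroidToricIdeal, RingHom.mem_ker]
  rfl

lemma quad_mem_GN {s t s' t' : T.σN}
    (h : ind (T.dN s) + ind (T.dN t) = ind (T.dN s') + ind (T.dN t')) :
    (X s * X t - X s' * X t' : MvPolynomial T.σN K) ∈ T.GN K := by
  refine ⟨⟨s, t, s', t', rfl⟩, ?_⟩
  rw [T.mem_JN_iff K]
  rw [map_sub, map_mul, map_mul, Phi_X, Phi_X, Phi_X, Phi_X, monomial_mul, monomial_mul, h,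
    sub_self]

lemma mem_J1_iff (f : MvPolynomial T.σ1 K) :
    f ∈ matroidToricIdeal K T.M₁ ↔ Phi K T.d1 f = 0 := by
  rw [matroidToricIdeal, RingHom.mem_ker]
  rfl

lemma mem_J2_iff (f : MvPolynomial T.σ2 K) :
    f ∈ matroidToricIdeal K T.M₂ ↔ Phi K T.d2 f = 0 := by
  rw [matroidToricIdeal, RingHom.mem_ker]
  rfl

lemma mon_mem_J1 {μ μ' : Multiset T.σ1} (h : W T.d1 μ = W T.d1 μ') :
    (mon μ - mon μ' : MvPolynomial T.σ1 K) ∈ matroidToricIdeal K T.M₁ := by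
  rw [T.mem_J1_iff K, map_sub, aeval_mon, aeval_mon, h, sub_self]

lemma mon_mem_J2 {μ μ' : Multiset T.σ2} (h : W T.d2 μ = W T.d2 μ') :
    (mon μ - mon μ' : MvPolynomial T.σ2 K) ∈ matroidToricIdeal K T.M₂ := by
  rw [T.mem_J2_iff K, map_sub, aeval_mon, aeval_mon, h, sub_self]

end TwoSumSetup

namespace TwoSumSetup
variable {α : Type} [Fintype α] [DecidableEq α] (T : TwoSumSetup α)

lemma bm_cons (s : T.σN) (m : Multiset T.σN) : T.bm (s ::ₘ m) = T.bmv s ::ₘ T.bm m := by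
  simp [bm]

lemma dm_cons (s : T.σN) (m : Multiset T.σN) : T.dm (s ::ₘ m) = T.dmv s ::ₘ T.dm m := by
  simp [dm]

lemma bm_extract {m : Multiset T.σN} {i : T.σ1} {μ : Multiset T.σ1}
    (h : T.bm m = i ::ₘ μ) : ∃ s m₁, m = s ::ₘ m₁ ∧ T.bmv s = i ∧ T.bm m₁ = μ := by
  have hi : i ∈ T.bm m := by rw [h]; exact Multiset.mem_cons_self _ _
  obtain ⟨s, hs, hsi⟩ := Multiset.mem_map.mp hi
  refine ⟨s, m.erase s, (Multiset.cons_erase hs).symm, hsi, ?_⟩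
  have h2 : T.bm (s ::ₘ m.erase s) = i ::ₘ μ := by rw [Multiset.cons_erase hs, h]
  rw [T.bm_cons, hsi] at h2
  exact (Multiset.cons_inj_right i).mp h2

lemma dm_extract {m : Multiset T.σN} {i : T.σ2} {μ : Multiset T.σ2}
    (h : T.dm m = i ::ₘ μ) : ∃ s m₁, m = s ::ₘ m₁ ∧ T.dmv s = i ∧ T.dm m₁ = μ := by
  have hi : i ∈ T.dm m := by rw [h]; exact Multiset.mem_cons_self _ _
  obtain ⟨s, hs, hsi⟩ := Multiset.mem_map.mp hi
  refine ⟨s, m.erase s, (Multiset.cons_erase hs).symm, hsi, ?_⟩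
  have h2 : T.dm (s ::ₘ m.erase s) = i ::ₘ μ := by rw [Multiset.cons_erase hs, h]
  rw [T.dm_cons, hsi] at h2
  exact (Multiset.cons_inj_right i).mp h2

variable (K : Type) [Field K]

lemma onestep1 (i j k l : T.σ1)
    (hind : ind (T.d1 i) + ind (T.d1 j) = ind (T.d1 k) + ind (T.d1 l))
    (w : Multiset T.σ1) (m : Multiset T.σN) (hm : T.bm m = i ::ₘ j ::ₘ w) :
    ∃ m', T.bm m' = k ::ₘ l ::ₘ w ∧ T.dm m' = T.dm m ∧
      (mon m - mon m' : MvPolynomial T.σN K) ∈ Ideal.span (T.GN K) := by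
  classical
  obtain ⟨s, m₁, rfl, hsi, hm₁⟩ := T.bm_extract hm
  obtain ⟨t, m₂, rfl, htj, hm₂⟩ := T.bm_extract hm₁
  set B1 := T.decB s with hB1
  set D1 := T.decD s with hD1
  set B2 := T.decB t with hB2
  set D2 := T.decD t with hD2
  have hA1 : Adm T.M₁ T.M₂ T.c B1 D1 := (T.dec_spec s).1
  have hA2 : Adm T.M₁ T.M₂ T.c B2 D2 := (T.dec_spec t).1
  have hi1 : T.d1 i = B1 := by rw [← hsi]; rfl
  have hj1 : T.d1 j = B2 := by rw [← htj]; rfl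
  have hcnt : ((if T.c ∈ B1 then 1 else 0) + if T.c ∈ B2 then 1 else 0)
      = ((if T.c ∈ k.1 then 1 else 0) + if T.c ∈ l.1 then 1 else 0) := by
    have hc := DFunLike.congr_fun hind T.c
    rw [Finsupp.add_apply, Finsupp.add_apply, hi1, hj1] at hc
    simpa [ind_apply, TwoSumSetup.d1] using hc
  have hindBD : ind B1 + ind B2 = ind k.1 + ind l.1 := by
    rw [← hi1, ← hj1]
    exact hind
  have hiffkl : ((T.c ∈ k.1 ↔ T.c ∈ B1) ∧ (T.c ∈ l.1 ↔ T.c ∈ B2)) ∨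
      ((T.c ∈ k.1 ↔ T.c ∈ B2) ∧ (T.c ∈ l.1 ↔ T.c ∈ B1)) := by
    by_cases h1 : T.c ∈ B1 <;> by_cases h2 : T.c ∈ B2 <;>
      by_cases h3 : T.c ∈ k.1 <;> by_cases h4 : T.c ∈ l.1 <;> simp_all
  have singlecancel : ∀ a b : α →₀ ℕ,
      a + (Finsupp.single T.c 1 + Finsupp.single T.c 1)
        = b + (Finsupp.single T.c 1 + Finsupp.single T.c 1) → a = b := by
    intro a b hab
    ext e
    have := DFunLike.congr_fun hab e
    simp only [Finsupp.add_apply] at this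
    omega
  rcases hiffkl with ⟨hk, hl⟩ | ⟨hk, hl⟩
  · -- pair k with D1, l with D2
    have hadm1 : Adm T.M₁ T.M₂ T.c k.1 D1 := ⟨k.2, hA1.2.1, by have := hA1.2.2; tauto⟩
    have hadm2 : Adm T.M₁ T.M₂ T.c l.1 D2 := ⟨l.2, hA2.2.1, by have := hA2.2.2; tauto⟩
    refine ⟨T.mkv hadm1 ::ₘ T.mkv hadm2 ::ₘ m₂, ?_, ?_, ?_⟩
    · rw [T.bm_cons, T.bm_cons, hm₂]
      have hbs' : T.bmv (T.mkv hadm1) = k := Subtype.ext ((T.dec_mk hadm1).1)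
      have hbt' : T.bmv (T.mkv hadm2) = l := Subtype.ext ((T.dec_mk hadm2).1)
      rw [hbs', hbt']
    · rw [T.dm_cons, T.dm_cons, T.dm_cons, T.dm_cons]
      have hds' : T.dmv (T.mkv hadm1) = T.dmv s := Subtype.ext (by
        show T.decD (T.mkv hadm1) = T.decD s
        rw [(T.dec_mk hadm1).2, hD1])
      have hdt' : T.dmv (T.mkv hadm2) = T.dmv t := Subtype.ext (by
        show T.decD (T.mkv hadm2) = T.decD t
        rw [(T.dec_mk hadm2).2, hD2])
      rw [hds', hdt']
    · have e1 := T.ind_dec s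
      rw [← hB1, ← hD1] at e1
      have e2 := T.ind_dec t
      rw [← hB2, ← hD2] at e2
      have e3 := T.ind_dec (T.mkv hadm1)
      rw [(T.dec_mk hadm1).1, (T.dec_mk hadm1).2] at e3
      have e4 := T.ind_dec (T.mkv hadm2)
      rw [(T.dec_mk hadm2).1, (T.dec_mk hadm2).2] at e4
      have big : (ind (T.dN s) + ind (T.dN t))
            + (Finsupp.single T.c 1 + Finsupp.single T.c 1)
          = (ind (T.dN (T.mkv hadm1)) + ind (T.dN (T.mkv hadm2)))
            + (Finsupp.single T.c 1 + Finsupp.single T.c 1) := by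
        calc (ind (T.dN s) + ind (T.dN t))
              + (Finsupp.single T.c 1 + Finsupp.single T.c 1)
            = (ind (T.dN s) + Finsupp.single T.c 1)
              + (ind (T.dN t) + Finsupp.single T.c 1) := by abel
          _ = (ind B1 + ind D1) + (ind B2 + ind D2) := by rw [e1, e2]
          _ = (ind B1 + ind B2) + (ind D1 + ind D2) := by abel
          _ = (ind k.1 + ind l.1) + (ind D1 + ind D2) := by rw [hindBD]
          _ = (ind k.1 + ind D1) + (ind l.1 + ind D2) := by abel
          _ = (ind (T.dN (T.mkv hadm1)) + Finsupp.single T.c 1)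
              + (ind (T.dN (T.mkv hadm2)) + Finsupp.single T.c 1) := by rw [e3, e4]
          _ = _ := by abel
      have hiq := singlecancel _ _ big
      have hq := T.quad_mem_GN K hiq
      have hmon : (mon (s ::ₘ t ::ₘ m₂) - mon (T.mkv hadm1 ::ₘ T.mkv hadm2 ::ₘ m₂)
          : MvPolynomial T.σN K)
          = (X s * X t - X (T.mkv hadm1) * X (T.mkv hadm2)) * mon m₂ := by
        rw [mon_cons, mon_cons, mon_cons, mon_cons]
        ring
      rw [hmon]
      exact Ideal.mul_mem_right _ _ (Ideal.subset_span hq)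
  · -- pair k with D2, l with D1
    have hadm1 : Adm T.M₁ T.M₂ T.c k.1 D2 := ⟨k.2, hA2.2.1, by have := hA2.2.2; tauto⟩
    have hadm2 : Adm T.M₁ T.M₂ T.c l.1 D1 := ⟨l.2, hA1.2.1, by have := hA1.2.2; tauto⟩
    refine ⟨T.mkv hadm1 ::ₘ T.mkv hadm2 ::ₘ m₂, ?_, ?_, ?_⟩
    · rw [T.bm_cons, T.bm_cons, hm₂]
      have hbs' : T.bmv (T.mkv hadm1) = k := Subtype.ext ((T.dec_mk hadm1).1)
      have hbt' : T.bmv (T.mkv hadm2) = l := Subtype.ext ((T.dec_mk hadm2).1)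
      rw [hbs', hbt']
    · rw [T.dm_cons, T.dm_cons, T.dm_cons, T.dm_cons]
      have hds' : T.dmv (T.mkv hadm1) = T.dmv t := Subtype.ext (by
        show T.decD (T.mkv hadm1) = T.decD t
        rw [(T.dec_mk hadm1).2, hD2])
      have hdt' : T.dmv (T.mkv hadm2) = T.dmv s := Subtype.ext (by
        show T.decD (T.mkv hadm2) = T.decD s
        rw [(T.dec_mk hadm2).2, hD1])
      rw [hds', hdt']
      exact Multiset.cons_swap _ _ _
    · have e1 := T.ind_dec s
      rw [← hB1, ← hD1] at e1
      have e2 := T.ind_dec t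
      rw [← hB2, ← hD2] at e2
      have e3 := T.ind_dec (T.mkv hadm1)
      rw [(T.dec_mk hadm1).1, (T.dec_mk hadm1).2] at e3
      have e4 := T.ind_dec (T.mkv hadm2)
      rw [(T.dec_mk hadm2).1, (T.dec_mk hadm2).2] at e4
      have big : (ind (T.dN s) + ind (T.dN t))
            + (Finsupp.single T.c 1 + Finsupp.single T.c 1)
          = (ind (T.dN (T.mkv hadm1)) + ind (T.dN (T.mkv hadm2)))
            + (Finsupp.single T.c 1 + Finsupp.single T.c 1) := by
        calc (ind (T.dN s) + ind (T.dN t))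
              + (Finsupp.single T.c 1 + Finsupp.single T.c 1)
            = (ind (T.dN s) + Finsupp.single T.c 1)
              + (ind (T.dN t) + Finsupp.single T.c 1) := by abel
          _ = (ind B1 + ind D1) + (ind B2 + ind D2) := by rw [e1, e2]
          _ = (ind B1 + ind B2) + (ind D1 + ind D2) := by abel
          _ = (ind k.1 + ind l.1) + (ind D1 + ind D2) := by rw [hindBD]
          _ = (ind k.1 + ind D2) + (ind l.1 + ind D1) := by abel
          _ = (ind (T.dN (T.mkv hadm1)) + Finsupp.single T.c 1)
              + (ind (T.dN (T.mkv hadm2)) + Finsupp.single T.c 1) := by rw [e3, e4]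
          _ = _ := by abel
      have hiq := singlecancel _ _ big
      have hq := T.quad_mem_GN K hiq
      have hmon : (mon (s ::ₘ t ::ₘ m₂) - mon (T.mkv hadm1 ::ₘ T.mkv hadm2 ::ₘ m₂)
          : MvPolynomial T.σN K)
          = (X s * X t - X (T.mkv hadm1) * X (T.mkv hadm2)) * mon m₂ := by
        rw [mon_cons, mon_cons, mon_cons, mon_cons]
        ring
      rw [hmon]
      exact Ideal.mul_mem_right _ _ (Ideal.subset_span hq)

end TwoSumSetup

namespace TwoSumSetup
variable {α : Type} [Fintype α] [DecidableEq α] (T : TwoSumSetup α) (K : Type) [Field K]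

lemma onestep2 (i j k l : T.σ2)
    (hind : ind (T.d2 i) + ind (T.d2 j) = ind (T.d2 k) + ind (T.d2 l))
    (w : Multiset T.σ2) (m : Multiset T.σN) (hm : T.dm m = i ::ₘ j ::ₘ w) :
    ∃ m', T.dm m' = k ::ₘ l ::ₘ w ∧ T.bm m' = T.bm m ∧
      (mon m - mon m' : MvPolynomial T.σN K) ∈ Ideal.span (T.GN K) := by
  classical
  obtain ⟨s, m₁, rfl, hsi, hm₁⟩ := T.dm_extract hm
  obtain ⟨t, m₂, rfl, htj, hm₂⟩ := T.dm_extract hm₁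
  set B1 := T.decB s with hB1
  set D1 := T.decD s with hD1
  set B2 := T.decB t with hB2
  set D2 := T.decD t with hD2
  have hA1 : Adm T.M₁ T.M₂ T.c B1 D1 := (T.dec_spec s).1
  have hA2 : Adm T.M₁ T.M₂ T.c B2 D2 := (T.dec_spec t).1
  have hi1 : T.d2 i = D1 := by rw [← hsi]; rfl
  have hj1 : T.d2 j = D2 := by rw [← htj]; rfl
  have hcnt : ((if T.c ∈ D1 then 1 else 0) + if T.c ∈ D2 then 1 else 0)
      = ((if T.c ∈ k.1 then 1 else 0) + if T.c ∈ l.1 then 1 else 0) := by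
    have hc := DFunLike.congr_fun hind T.c
    rw [Finsupp.add_apply, Finsupp.add_apply, hi1, hj1] at hc
    simpa [ind_apply, TwoSumSetup.d2] using hc
  have hindBD : ind D1 + ind D2 = ind k.1 + ind l.1 := by
    rw [← hi1, ← hj1]
    exact hind
  have hiffkl : ((T.c ∈ k.1 ↔ T.c ∈ D1) ∧ (T.c ∈ l.1 ↔ T.c ∈ D2)) ∨
      ((T.c ∈ k.1 ↔ T.c ∈ D2) ∧ (T.c ∈ l.1 ↔ T.c ∈ D1)) := by
    by_cases h1 : T.c ∈ D1 <;> by_cases h2 : T.c ∈ D2 <;>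
      by_cases h3 : T.c ∈ k.1 <;> by_cases h4 : T.c ∈ l.1 <;> simp_all
  have singlecancel : ∀ a b : α →₀ ℕ,
      a + (Finsupp.single T.c 1 + Finsupp.single T.c 1)
        = b + (Finsupp.single T.c 1 + Finsupp.single T.c 1) → a = b := by
    intro a b hab
    ext e
    have := DFunLike.congr_fun hab e
    simp only [Finsupp.add_apply] at this
    omega
  rcases hiffkl with ⟨hk, hl⟩ | ⟨hk, hl⟩
  · have hadm1 : Adm T.M₁ T.M₂ T.c B1 k.1 := ⟨hA1.1, k.2, by have := hA1.2.2; tauto⟩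
    have hadm2 : Adm T.M₁ T.M₂ T.c B2 l.1 := ⟨hA2.1, l.2, by have := hA2.2.2; tauto⟩
    refine ⟨T.mkv hadm1 ::ₘ T.mkv hadm2 ::ₘ m₂, ?_, ?_, ?_⟩
    · rw [T.dm_cons, T.dm_cons, hm₂]
      have hbs' : T.dmv (T.mkv hadm1) = k := Subtype.ext ((T.dec_mk hadm1).2)
      have hbt' : T.dmv (T.mkv hadm2) = l := Subtype.ext ((T.dec_mk hadm2).2)
      rw [hbs', hbt']
    · rw [T.bm_cons, T.bm_cons, T.bm_cons, T.bm_cons]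
      have hds' : T.bmv (T.mkv hadm1) = T.bmv s := Subtype.ext (by
        show T.decB (T.mkv hadm1) = T.decB s
        rw [(T.dec_mk hadm1).1, hB1])
      have hdt' : T.bmv (T.mkv hadm2) = T.bmv t := Subtype.ext (by
        show T.decB (T.mkv hadm2) = T.decB t
        rw [(T.dec_mk hadm2).1, hB2])
      rw [hds', hdt']
    · have e1 := T.ind_dec s
      rw [← hB1, ← hD1] at e1
      have e2 := T.ind_dec t
      rw [← hB2, ← hD2] at e2
      have e3 := T.ind_dec (T.mkv hadm1)
      rw [(T.dec_mk hadm1).1, (T.dec_mk hadm1).2] at e3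
      have e4 := T.ind_dec (T.mkv hadm2)
      rw [(T.dec_mk hadm2).1, (T.dec_mk hadm2).2] at e4
      have big : (ind (T.dN s) + ind (T.dN t))
            + (Finsupp.single T.c 1 + Finsupp.single T.c 1)
          = (ind (T.dN (T.mkv hadm1)) + ind (T.dN (T.mkv hadm2)))
            + (Finsupp.single T.c 1 + Finsupp.single T.c 1) := by
        calc (ind (T.dN s) + ind (T.dN t))
              + (Finsupp.single T.c 1 + Finsupp.single T.c 1)
            = (ind (T.dN s) + Finsupp.single T.c 1)
              + (ind (T.dN t) + Finsupp.single T.c 1) := by abel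
          _ = (ind B1 + ind D1) + (ind B2 + ind D2) := by rw [e1, e2]
          _ = (ind D1 + ind D2) + (ind B1 + ind B2) := by abel
          _ = (ind k.1 + ind l.1) + (ind B1 + ind B2) := by rw [hindBD]
          _ = (ind B1 + ind k.1) + (ind B2 + ind l.1) := by abel
          _ = (ind (T.dN (T.mkv hadm1)) + Finsupp.single T.c 1)
              + (ind (T.dN (T.mkv hadm2)) + Finsupp.single T.c 1) := by rw [e3, e4]
          _ = _ := by abel
      have hiq := singlecancel _ _ big
      have hq := T.quad_mem_GN K hiq
      have hmon : (mon (s ::ₘ t ::ₘ m₂) - mon (T.mkv hadm1 ::ₘ T.mkv hadm2 ::ₘ m₂)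
          : MvPolynomial T.σN K)
          = (X s * X t - X (T.mkv hadm1) * X (T.mkv hadm2)) * mon m₂ := by
        rw [mon_cons, mon_cons, mon_cons, mon_cons]
        ring
      rw [hmon]
      exact Ideal.mul_mem_right _ _ (Ideal.subset_span hq)
  · have hadm1 : Adm T.M₁ T.M₂ T.c B2 k.1 := ⟨hA2.1, k.2, by have := hA2.2.2; tauto⟩
    have hadm2 : Adm T.M₁ T.M₂ T.c B1 l.1 := ⟨hA1.1, l.2, by have := hA1.2.2; tauto⟩
    refine ⟨T.mkv hadm1 ::ₘ T.mkv hadm2 ::ₘ m₂, ?_, ?_, ?_⟩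
    · rw [T.dm_cons, T.dm_cons, hm₂]
      have hbs' : T.dmv (T.mkv hadm1) = k := Subtype.ext ((T.dec_mk hadm1).2)
      have hbt' : T.dmv (T.mkv hadm2) = l := Subtype.ext ((T.dec_mk hadm2).2)
      rw [hbs', hbt']
    · rw [T.bm_cons, T.bm_cons, T.bm_cons, T.bm_cons]
      have hds' : T.bmv (T.mkv hadm1) = T.bmv t := Subtype.ext (by
        show T.decB (T.mkv hadm1) = T.decB t
        rw [(T.dec_mk hadm1).1, hB2])
      have hdt' : T.bmv (T.mkv hadm2) = T.bmv s := Subtype.ext (by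
        show T.decB (T.mkv hadm2) = T.decB s
        rw [(T.dec_mk hadm2).1, hB1])
      rw [hds', hdt']
      exact Multiset.cons_swap _ _ _
    · have e1 := T.ind_dec s
      rw [← hB1, ← hD1] at e1
      have e2 := T.ind_dec t
      rw [← hB2, ← hD2] at e2
      have e3 := T.ind_dec (T.mkv hadm1)
      rw [(T.dec_mk hadm1).1, (T.dec_mk hadm1).2] at e3
      have e4 := T.ind_dec (T.mkv hadm2)
      rw [(T.dec_mk hadm2).1, (T.dec_mk hadm2).2] at e4
      have big : (ind (T.dN s) + ind (T.dN t))
            + (Finsupp.single T.c 1 + Finsupp.single T.c 1)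
          = (ind (T.dN (T.mkv hadm1)) + ind (T.dN (T.mkv hadm2)))
            + (Finsupp.single T.c 1 + Finsupp.single T.c 1) := by
        calc (ind (T.dN s) + ind (T.dN t))
              + (Finsupp.single T.c 1 + Finsupp.single T.c 1)
            = (ind (T.dN s) + Finsupp.single T.c 1)
              + (ind (T.dN t) + Finsupp.single T.c 1) := by abel
          _ = (ind B1 + ind D1) + (ind B2 + ind D2) := by rw [e1, e2]
          _ = (ind D1 + ind D2) + (ind B1 + ind B2) := by abel
          _ = (ind k.1 + ind l.1) + (ind B1 + ind B2) := by rw [hindBD]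
          _ = (ind B2 + ind k.1) + (ind B1 + ind l.1) := by abel
          _ = (ind (T.dN (T.mkv hadm1)) + Finsupp.single T.c 1)
              + (ind (T.dN (T.mkv hadm2)) + Finsupp.single T.c 1) := by rw [e3, e4]
          _ = _ := by abel
      have hiq := singlecancel _ _ big
      have hq := T.quad_mem_GN K hiq
      have hmon : (mon (s ::ₘ t ::ₘ m₂) - mon (T.mkv hadm1 ::ₘ T.mkv hadm2 ::ₘ m₂)
          : MvPolynomial T.σN K)
          = (X s * X t - X (T.mkv hadm1) * X (T.mkv hadm2)) * mon m₂ := by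
        rw [mon_cons, mon_cons, mon_cons, mon_cons]
        ring
      rw [hmon]
      exact Ideal.mul_mem_right _ _ (Ideal.subset_span hq)

end TwoSumSetup

namespace TwoSumSetup
variable {α : Type} [Fintype α] [DecidableEq α] (T : TwoSumSetup α) (K : Type) [Field K]

lemma hind_of_G1 {G₁ : Set (MvPolynomial T.σ1 K)}
    (hspan₁ : Ideal.span G₁ = matroidToricIdeal K T.M₁) {i j k l : T.σ1}
    (hg : (X i * X j - X k * X l : MvPolynomial T.σ1 K) ∈ G₁) :
    ind (T.d1 i) + ind (T.d1 j) = ind (T.d1 k) + ind (T.d1 l) := by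
  have hmem : (X i * X j - X k * X l : MvPolynomial T.σ1 K) ∈ matroidToricIdeal K T.M₁ :=
    hspan₁ ▸ Ideal.subset_span hg
  rw [T.mem_J1_iff] at hmem
  rw [map_sub, map_mul, map_mul, Phi_X, Phi_X, Phi_X, Phi_X, monomial_mul, monomial_mul,
    one_mul] at hmem
  have h2 := sub_eq_zero.mp hmem
  exact (monomial_left_inj (one_ne_zero)).mp h2

lemma hind_of_G2 {G₂ : Set (MvPolynomial T.σ2 K)}
    (hspan₂ : Ideal.span G₂ = matroidToricIdeal K T.M₂) {i j k l : T.σ2}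
    (hg : (X i * X j - X k * X l : MvPolynomial T.σ2 K) ∈ G₂) :
    ind (T.d2 i) + ind (T.d2 j) = ind (T.d2 k) + ind (T.d2 l) := by
  have hmem : (X i * X j - X k * X l : MvPolynomial T.σ2 K) ∈ matroidToricIdeal K T.M₂ :=
    hspan₂ ▸ Ideal.subset_span hg
  rw [T.mem_J2_iff] at hmem
  rw [map_sub, map_mul, map_mul, Phi_X, Phi_X, Phi_X, Phi_X, monomial_mul, monomial_mul,
    one_mul] at hmem
  have h2 := sub_eq_zero.mp hmem
  exact (monomial_left_inj (one_ne_zero)).mp h2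

lemma lift1 {G₁ : Set (MvPolynomial T.σ1 K)}
    (hspan₁ : Ideal.span G₁ = matroidToricIdeal K T.M₁)
    {μ μ' : Multiset T.σ1} (h : Relation.EqvGen (QRel G₁) μ μ') :
    (∀ m : Multiset T.σN, T.bm m = μ → ∃ m', T.bm m' = μ' ∧ T.dm m' = T.dm m ∧
      (mon m - mon m' : MvPolynomial T.σN K) ∈ Ideal.span (T.GN K)) ∧
    (∀ m : Multiset T.σN, T.bm m = μ' → ∃ m', T.bm m' = μ ∧ T.dm m' = T.dm m ∧
      (mon m - mon m' : MvPolynomial T.σN K) ∈ Ideal.span (T.GN K)) := by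
  induction h with
  | rel a b hab =>
    obtain ⟨i, j, k, l, w, hg, rfl, rfl⟩ := hab
    constructor
    · intro m hm
      exact T.onestep1 K i j k l (T.hind_of_G1 K hspan₁ hg) w m hm
    · intro m hm
      exact T.onestep1 K k l i j (T.hind_of_G1 K hspan₁ hg).symm w m hm
  | refl a =>
    exact ⟨fun m hm => ⟨m, hm, rfl, by rw [sub_self]; exact Ideal.zero_mem _⟩,
      fun m hm => ⟨m, hm, rfl, by rw [sub_self]; exact Ideal.zero_mem _⟩⟩
  | symm a b _ ih => exact ⟨ih.2, ih.1⟩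
  | trans a b c _ _ ih1 ih2 =>
    constructor
    · intro m hm
      obtain ⟨m₁, h1, h2, h3⟩ := ih1.1 m hm
      obtain ⟨m₂, h1', h2', h3'⟩ := ih2.1 m₁ h1
      refine ⟨m₂, h1', h2'.trans h2, ?_⟩
      have := Ideal.add_mem _ h3 h3'
      rwa [sub_add_sub_cancel] at this
    · intro m hm
      obtain ⟨m₁, h1, h2, h3⟩ := ih2.2 m hm
      obtain ⟨m₂, h1', h2', h3'⟩ := ih1.2 m₁ h1
      refine ⟨m₂, h1', h2'.trans h2, ?_⟩
      have := Ideal.add_mem _ h3 h3'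
      rwa [sub_add_sub_cancel] at this

lemma lift2 {G₂ : Set (MvPolynomial T.σ2 K)}
    (hspan₂ : Ideal.span G₂ = matroidToricIdeal K T.M₂)
    {μ μ' : Multiset T.σ2} (h : Relation.EqvGen (QRel G₂) μ μ') :
    (∀ m : Multiset T.σN, T.dm m = μ → ∃ m', T.dm m' = μ' ∧ T.bm m' = T.bm m ∧
      (mon m - mon m' : MvPolynomial T.σN K) ∈ Ideal.span (T.GN K)) ∧
    (∀ m : Multiset T.σN, T.dm m = μ' → ∃ m', T.dm m' = μ ∧ T.bm m' = T.bm m ∧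
      (mon m - mon m' : MvPolynomial T.σN K) ∈ Ideal.span (T.GN K)) := by
  induction h with
  | rel a b hab =>
    obtain ⟨i, j, k, l, w, hg, rfl, rfl⟩ := hab
    constructor
    · intro m hm
      exact T.onestep2 K i j k l (T.hind_of_G2 K hspan₂ hg) w m hm
    · intro m hm
      exact T.onestep2 K k l i j (T.hind_of_G2 K hspan₂ hg).symm w m hm
  | refl a =>
    exact ⟨fun m hm => ⟨m, hm, rfl, by rw [sub_self]; exact Ideal.zero_mem _⟩,
      fun m hm => ⟨m, hm, rfl, by rw [sub_self]; exact Ideal.zero_mem _⟩⟩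
  | symm a b _ ih => exact ⟨ih.2, ih.1⟩
  | trans a b c _ _ ih1 ih2 =>
    constructor
    · intro m hm
      obtain ⟨m₁, h1, h2, h3⟩ := ih1.1 m hm
      obtain ⟨m₂, h1', h2', h3'⟩ := ih2.1 m₁ h1
      refine ⟨m₂, h1', h2'.trans h2, ?_⟩
      have := Ideal.add_mem _ h3 h3'
      rwa [sub_add_sub_cancel] at this
    · intro m hm
      obtain ⟨m₁, h1, h2, h3⟩ := ih2.2 m hm
      obtain ⟨m₂, h1', h2', h3'⟩ := ih1.2 m₁ h1
      refine ⟨m₂, h1', h2'.trans h2, ?_⟩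
      have := Ideal.add_mem _ h3 h3'
      rwa [sub_add_sub_cancel] at this

end TwoSumSetup

namespace TwoSumSetup
variable {α : Type} [Fintype α] [DecidableEq α] (T : TwoSumSetup α) (K : Type) [Field K]

lemma match_pairs : ∀ (n : ℕ) (m m' : Multiset T.σN), Multiset.card m = n →
    T.bm m = T.bm m' → T.dm m = T.dm m' →
    (mon m - mon m' : MvPolynomial T.σN K) ∈ Ideal.span (T.GN K) := by
  intro n
  induction n with
  | zero =>
    intro m m' hc hb _
    have hm : m = 0 := Multiset.card_eq_zero.mp hc
    have hc' : Multiset.card m' = 0 := by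
      have : Multiset.card (T.bm m) = Multiset.card (T.bm m') := by rw [hb]
      rw [bm, bm, Multiset.card_map, Multiset.card_map] at this
      omega
    have hm' : m' = 0 := Multiset.card_eq_zero.mp hc'
    rw [hm, hm', sub_self]
    exact Ideal.zero_mem _
  | succ n IH =>
    intro m m' hc hb hd
    have hc' : Multiset.card m' = n + 1 := by
      have : Multiset.card (T.bm m) = Multiset.card (T.bm m') := by rw [hb]
      rw [bm, bm, Multiset.card_map, Multiset.card_map] at this
      omega
    have hm'ne : m' ≠ 0 := by
      intro h
      rw [h] at hc'
      simp at hc'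
    obtain ⟨s₀, hs₀m'⟩ := Multiset.exists_mem_of_ne_zero hm'ne
    have hm'eq : m' = s₀ ::ₘ m'.erase s₀ := (Multiset.cons_erase hs₀m').symm
    by_cases hs₀ : s₀ ∈ m
    · have hmeq : m = s₀ ::ₘ m.erase s₀ := (Multiset.cons_erase hs₀).symm
      have hbm : T.bm (m.erase s₀) = T.bm (m'.erase s₀) := by
        have h1 : T.bm m = T.bmv s₀ ::ₘ T.bm (m.erase s₀) := by
          conv_lhs => rw [hmeq]
          exact T.bm_cons _ _
        have h2 : T.bm m' = T.bmv s₀ ::ₘ T.bm (m'.erase s₀) := by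
          conv_lhs => rw [hm'eq]
          exact T.bm_cons _ _
        rw [h1, h2] at hb
        exact (Multiset.cons_inj_right _).mp hb
      have hdm : T.dm (m.erase s₀) = T.dm (m'.erase s₀) := by
        have h1 : T.dm m = T.dmv s₀ ::ₘ T.dm (m.erase s₀) := by
          conv_lhs => rw [hmeq]
          exact T.dm_cons _ _
        have h2 : T.dm m' = T.dmv s₀ ::ₘ T.dm (m'.erase s₀) := by
          conv_lhs => rw [hm'eq]
          exact T.dm_cons _ _
        rw [h1, h2] at hd
        exact (Multiset.cons_inj_right _).mp hd
      have hcard : Multiset.card (m.erase s₀) = n := by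
        rw [Multiset.card_erase_of_mem hs₀, hc]
        rfl
      have hIH := IH (m.erase s₀) (m'.erase s₀) hcard hbm hdm
      have hfac : (mon m - mon m' : MvPolynomial T.σN K)
          = X s₀ * (mon (m.erase s₀) - mon (m'.erase s₀)) := by
        conv_lhs => rw [hmeq, hm'eq]
        rw [mon_cons, mon_cons]
        ring
      rw [hfac]
      exact Ideal.mul_mem_left _ _ hIH
    · -- s₀ ∉ m : swap step first
      have hbs₀ : T.bmv s₀ ∈ T.bm m := by
        rw [hb, bm]
        exact Multiset.mem_map_of_mem _ hs₀m'
      obtain ⟨s, hsm, hbs⟩ := Multiset.mem_map.mp hbs₀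
      have hds₀ : T.dmv s₀ ∈ T.dm m := by
        rw [hd, dm]
        exact Multiset.mem_map_of_mem _ hs₀m'
      obtain ⟨t, htm, hdt⟩ := Multiset.mem_map.mp hds₀
      have hBs : T.decB s = T.decB s₀ := congrArg Subtype.val hbs
      have hDt : T.decD t = T.decD s₀ := congrArg Subtype.val hdt
      have hst : s ≠ t := by
        intro h
        subst h
        exact hs₀ (T.var_ext hBs hDt ▸ hsm)
      have htm2 : t ∈ m.erase s := (Multiset.mem_erase_of_ne hst.symm).mpr htm
      have hmeq : m = s ::ₘ m.erase s := (Multiset.cons_erase hsm).symm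
      have hmeq2 : m.erase s = t ::ₘ (m.erase s).erase t := (Multiset.cons_erase htm2).symm
      set m₂ := (m.erase s).erase t with hm₂
      have hAs := (T.dec_spec s).1
      have hAt := (T.dec_spec t).1
      have hA0 := (T.dec_spec s₀).1
      have hadm1 : Adm T.M₁ T.M₂ T.c (T.decB s) (T.decD t) := by
        rw [hBs, hDt]
        exact ⟨hA0.1, hA0.2.1, hA0.2.2⟩
      have hadm2 : Adm T.M₁ T.M₂ T.c (T.decB t) (T.decD s) := by
        refine ⟨hAt.1, hAs.2.1, ?_⟩
        have h1 := hAs.2.2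
        have h2 := hAt.2.2
        have h3 := hA0.2.2
        rw [← hBs, ← hDt] at h3
        tauto
      have hs'eq : T.mkv hadm1 = s₀ := by
        apply T.var_ext
        · rw [(T.dec_mk hadm1).1, hBs]
        · rw [(T.dec_mk hadm1).2, hDt]
      -- the quadric
      have singlecancel : ∀ a b : α →₀ ℕ,
          a + (Finsupp.single T.c 1 + Finsupp.single T.c 1)
            = b + (Finsupp.single T.c 1 + Finsupp.single T.c 1) → a = b := by
        intro a b hab
        ext e
        have := DFunLike.congr_fun hab e
        simp only [Finsupp.add_apply] at this
        omega
      have e1 := T.ind_dec s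
      have e2 := T.ind_dec t
      have e3 := T.ind_dec (T.mkv hadm1)
      rw [(T.dec_mk hadm1).1, (T.dec_mk hadm1).2] at e3
      have e4 := T.ind_dec (T.mkv hadm2)
      rw [(T.dec_mk hadm2).1, (T.dec_mk hadm2).2] at e4
      have big : (ind (T.dN s) + ind (T.dN t))
            + (Finsupp.single T.c 1 + Finsupp.single T.c 1)
          = (ind (T.dN (T.mkv hadm1)) + ind (T.dN (T.mkv hadm2)))
            + (Finsupp.single T.c 1 + Finsupp.single T.c 1) := by
        calc (ind (T.dN s) + ind (T.dN t))
              + (Finsupp.single T.c 1 + Finsupp.single T.c 1)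
            = (ind (T.dN s) + Finsupp.single T.c 1)
              + (ind (T.dN t) + Finsupp.single T.c 1) := by abel
          _ = (ind (T.decB s) + ind (T.decD s)) + (ind (T.decB t) + ind (T.decD t)) := by
              rw [e1, e2]
          _ = (ind (T.decB s) + ind (T.decD t)) + (ind (T.decB t) + ind (T.decD s)) := by
              abel
          _ = (ind (T.dN (T.mkv hadm1)) + Finsupp.single T.c 1)
              + (ind (T.dN (T.mkv hadm2)) + Finsupp.single T.c 1) := by rw [e3, e4]
          _ = _ := by abel
      have hiq := singlecancel _ _ big
      have hq := T.quad_mem_GN K hiq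
      have hstep : (mon m - mon (T.mkv hadm1 ::ₘ T.mkv hadm2 ::ₘ m₂)
          : MvPolynomial T.σN K) ∈ Ideal.span (T.GN K) := by
        have hfac : (mon m - mon (T.mkv hadm1 ::ₘ T.mkv hadm2 ::ₘ m₂)
            : MvPolynomial T.σN K)
            = (X s * X t - X (T.mkv hadm1) * X (T.mkv hadm2)) * mon m₂ := by
          conv_lhs => rw [hmeq, hmeq2]
          rw [mon_cons, mon_cons, mon_cons, mon_cons]
          ring
        rw [hfac]
        exact Ideal.mul_mem_right _ _ (Ideal.subset_span hq)
      -- now the remainder shares s₀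
      have hcardm₂ : Multiset.card m₂ + 2 = n + 1 := by
        have : Multiset.card m = Multiset.card m₂ + 2 := by
          conv_lhs => rw [hmeq, hmeq2]
          simp
        omega
      have hbmv_t' : T.bmv (T.mkv hadm2) = T.bmv t := Subtype.ext (by
        show T.decB (T.mkv hadm2) = T.decB t
        rw [(T.dec_mk hadm2).1])
      have hdmv_t' : T.dmv (T.mkv hadm2) = T.dmv s := Subtype.ext (by
        show T.decD (T.mkv hadm2) = T.decD s
        rw [(T.dec_mk hadm2).2])
      have hbrest : T.bm (T.mkv hadm2 ::ₘ m₂) = T.bm (m'.erase s₀) := by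
        have h1 : T.bm m = T.bmv s ::ₘ T.bmv t ::ₘ T.bm m₂ := by
          conv_lhs => rw [hmeq, hmeq2]
          rw [T.bm_cons, T.bm_cons]
        have h2 : T.bm m' = T.bmv s₀ ::ₘ T.bm (m'.erase s₀) := by
          conv_lhs => rw [hm'eq]
          exact T.bm_cons _ _
        rw [h1, h2, ← hbs] at hb
        have h3 := (Multiset.cons_inj_right _).mp hb
        rw [T.bm_cons, hbmv_t', h3]
      have hdrest : T.dm (T.mkv hadm2 ::ₘ m₂) = T.dm (m'.erase s₀) := by
        have h1 : T.dm m = T.dmv s ::ₘ T.dmv t ::ₘ T.dm m₂ := by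
          conv_lhs => rw [hmeq, hmeq2]
          rw [T.dm_cons, T.dm_cons]
        have h2 : T.dm m' = T.dmv s₀ ::ₘ T.dm (m'.erase s₀) := by
          conv_lhs => rw [hm'eq]
          exact T.dm_cons _ _
        rw [h1, h2, ← hdt, Multiset.cons_swap] at hd
        have h3 := (Multiset.cons_inj_right _).mp hd
        rw [T.dm_cons, hdmv_t', h3]
      have hIH := IH (T.mkv hadm2 ::ₘ m₂) (m'.erase s₀) (by simp; omega) hbrest hdrest
      have hstep2 : (mon (T.mkv hadm1 ::ₘ T.mkv hadm2 ::ₘ m₂) - mon m'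
          : MvPolynomial T.σN K) ∈ Ideal.span (T.GN K) := by
        have hfac : (mon (T.mkv hadm1 ::ₘ T.mkv hadm2 ::ₘ m₂) - mon m'
            : MvPolynomial T.σN K)
            = X s₀ * (mon (T.mkv hadm2 ::ₘ m₂) - mon (m'.erase s₀)) := by
          conv_lhs => rw [hm'eq]
          rw [mon_cons, mon_cons, mon_cons, hs'eq]
          ring
        rw [hfac]
        exact Ideal.mul_mem_left _ _ hIH
      have := Ideal.add_mem _ hstep hstep2
      rwa [sub_add_sub_cancel] at this

end TwoSumSetup


namespace TwoSumSetup
variable {α : Type} [Fintype α] [DecidableEq α] (T : TwoSumSetup α) (K : Type) [Field K]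

lemma main_binomial {G₁ : Set (MvPolynomial T.σ1 K)} {G₂ : Set (MvPolynomial T.σ2 K)}
    (hq₁ : IsQuadBinomialSet' G₁) (hspan₁ : Ideal.span G₁ = matroidToricIdeal K T.M₁)
    (hq₂ : IsQuadBinomialSet' G₂) (hspan₂ : Ideal.span G₂ = matroidToricIdeal K T.M₂)
    {m m' : Multiset T.σN} (h : W T.dN m = W T.dN m') :
    (mon m - mon m' : MvPolynomial T.σN K) ∈ Ideal.span (T.GN K) := by
  obtain ⟨hW1, hW2⟩ := T.W_eq_split h
  have hJ1 : (mon (T.bm m) - mon (T.bm m') : MvPolynomial T.σ1 K) ∈ Ideal.span G₁ := by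
    rw [hspan₁]
    exact T.mon_mem_J1 K hW1
  have hcon1 := span_binomial_connect G₁ hq₁ hJ1
  obtain ⟨m₁, hb1, hd1, hs1⟩ := (T.lift1 K hspan₁ hcon1).1 m rfl
  have hW2' : W T.d2 (T.dm m₁) = W T.d2 (T.dm m') := by
    rw [hd1, hW2]
  have hJ2 : (mon (T.dm m₁) - mon (T.dm m') : MvPolynomial T.σ2 K) ∈ Ideal.span G₂ := by
    rw [hspan₂]
    exact T.mon_mem_J2 K hW2'
  have hcon2 := span_binomial_connect G₂ hq₂ hJ2
  obtain ⟨m₂, hd2', hb2', hs2⟩ := (T.lift2 K hspan₂ hcon2).1 m₁ rfl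
  have hmatch := T.match_pairs K (Multiset.card m₂) m₂ m' rfl (by rw [hb2', hb1]) hd2'
  have h12 := Ideal.add_mem _ hs1 hs2
  rw [sub_add_sub_cancel] at h12
  have := Ideal.add_mem _ h12 hmatch
  rwa [sub_add_sub_cancel] at this

end TwoSumSetup


/-- Quadratic generation of toric ideals of matroids is preserved by 2-sums. -/
theorem statement17 (K : Type) [Field K] {α : Type} [Fintype α] [DecidableEq α]
    (M₁ M₂ MS M2s : Matroid α) (c : α) (hE : M₁.E ∩ M₂.E = {c})
    (hl1 : ¬ IsLoopElem M₁ c) (hc1 : ¬ IsColoopElem M₁ c)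
    (hl2 : ¬ IsLoopElem M₂ c) (hc2 : ¬ IsColoopElem M₂ c)
    -- `MS` is the series connection `S(M₁, M₂)` with respect to the basepoint `c`
    (hSE : MS.E = M₁.E ∪ M₂.E)
    (hS : ∀ S : Set α, MS.IsBase S ↔
      ∃ B D, M₁.IsBase B ∧ M₂.IsBase D ∧ Disjoint B D ∧ S = B ∪ D)
    -- the 2-sum `M₁ ⊕₂ M₂` is the contraction `S(M₁, M₂) / c`
    (h2s : IsContractionOf M2s MS c)
    (h₁ : GeneratedByQuadBinomials (matroidToricIdeal K M₁))
    (h₂ : GeneratedByQuadBinomials (matroidToricIdeal K M₂)) :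
    GeneratedByQuadBinomials (matroidToricIdeal K M2s) := by
  classical
  set T : TwoSumSetup α := ⟨M₁, M₂, MS, M2s, c, hE, hl1, hc1, hl2, hc2, hSE, hS, h2s⟩ with hT
  obtain ⟨G₁, hq₁, hspan₁⟩ := h₁
  obtain ⟨G₂, hq₂, hspan₂⟩ := h₂
  have hq₁' : IsQuadBinomialSet' G₁ := hq₁
  have hq₂' : IsQuadBinomialSet' G₂ := hq₂
  refine ⟨T.GN K, fun f hf => hf.1, ?_⟩
  apply le_antisymm
  · rw [Ideal.span_le]
    exact fun f hf => hf.2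
  · intro f hf
    have hker : Phi K T.dN f = 0 := (T.mem_JN_iff K f).mp hf
    refine ker_le_span (T.GN K) ?_ f hker
    intro a b hab
    rw [← mon_toMultiset, ← mon_toMultiset]
    exact T.main_binomial K hq₁' hspan₁ hq₂' hspan₂ hab
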